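/- For the Levi-Civita connection ∇ of the Mrugala metric G and the frame vector fields ξ = ∂_{x^0}, P_i = ∂_{p_i}, X_i = ∂_{x^i} − p_i ∂_{x^0} on P, one has: ∇_ξ ξ = 0, ∇_{P_i} P_j = 0, ∇_{X_i} X_j = 0, ∇_ξ P_i = ∇_{P_i} ξ = ½ P_i, ∇_ξ X_j = ∇_{X_j} ξ = −½ X_j, ∇_{P_i} X_j = −½ δ_{ij} ξ and ∇_{X_i} P_j = ½ δ_{ij} ξ. -/

import Mathlib

/-!
Statement 4: Covariant derivatives of the frame `ξ = ∂_{x^0}`, `P_i = ∂_{p_i}`,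
`X_i = ∂_{x^i} - p_i ∂_{x^0}` with respect to the Levi-Civita connection of the
Mrugala metric `G`:
`∇_ξ ξ = 0`, `∇_{P_i} P_j = 0`, `∇_{X_i} X_j = 0`,
`∇_ξ P_i = ∇_{P_i} ξ = ½ P_i`, `∇_ξ X_j = ∇_{X_j} ξ = -½ X_j`,
`∇_{P_i} X_j = -½ δ_{ij} ξ`, `∇_{X_i} P_j = ½ δ_{ij} ξ`.
-/

abbrev Idx (n : ℕ) : Type := Unit ⊕ (Fin n ⊕ Fin n)
abbrev Pt (n : ℕ) : Type := Idx n → ℝ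

/-- The Mrugala metric `G = [[1, 0, pᵀ], [0, 0ₙ, Iₙ], [p, Iₙ, p pᵀ]]`. -/
def Gmat (n : ℕ) (m : Pt n) : Matrix (Idx n) (Idx n) ℝ :=
  Matrix.of fun a b =>
    match a, b with
    | Sum.inl _, Sum.inl _ => 1
    | Sum.inl _, Sum.inr (Sum.inl _) => 0
    | Sum.inl _, Sum.inr (Sum.inr j) => m (Sum.inr (Sum.inl j))
    | Sum.inr (Sum.inl _), Sum.inl _ => 0
    | Sum.inr (Sum.inl _), Sum.inr (Sum.inl _) => 0
    | Sum.inr (Sum.inl i), Sum.inr (Sum.inr j) => if i = j then 1 else 0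
    | Sum.inr (Sum.inr i), Sum.inl _ => m (Sum.inr (Sum.inl i))
    | Sum.inr (Sum.inr i), Sum.inr (Sum.inl j) => if i = j then 1 else 0
    | Sum.inr (Sum.inr i), Sum.inr (Sum.inr j) =>
        m (Sum.inr (Sum.inl i)) * m (Sum.inr (Sum.inl j))

/-- Partial derivative `∂_a f (m)` of a scalar function on `P`. -/
noncomputable def pd {n : ℕ} (f : Pt n → ℝ) (m : Pt n) (a : Idx n) : ℝ :=
  fderiv ℝ f m (Pi.single a 1)

/-- Christoffel symbols `Γ^α_{βγ} = ½ Σ_s G^{αs}(∂_β G_{γs} + ∂_γ G_{βs} - ∂_s G_{βγ})`. -/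
noncomputable def Christoffel (n : ℕ) (m : Pt n) (α β γ : Idx n) : ℝ :=
  (1 / 2) * ∑ s, (Gmat n m)⁻¹ α s *
    (pd (fun m' => Gmat n m' γ s) m β + pd (fun m' => Gmat n m' β s) m γ
      - pd (fun m' => Gmat n m' β γ) m s)

/-- Covariant derivative `(∇_Y Z)^α = Y^β ∂_β Z^α + Γ^α_{βγ} Y^β Z^γ`. -/
noncomputable def covDeriv (n : ℕ) (Y Z : Pt n → Pt n) (m : Pt n) : Pt n := fun α =>
  (∑ β, Y m β * pd (fun m' => Z m' α) m β)
    + ∑ β, ∑ γ, Christoffel n m α β γ * Y m β * Z m γ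

/-- The frame field `ξ = ∂_{x^0}`. -/
noncomputable def xiVF (n : ℕ) : Pt n → Pt n := fun _ => Pi.single (Sum.inl ()) 1

/-- The frame field `P_i = ∂_{p_i}`. -/
noncomputable def PVF (n : ℕ) (i : Fin n) : Pt n → Pt n :=
  fun _ => Pi.single (Sum.inr (Sum.inl i)) 1

/-- The frame field `X_i = ∂_{x^i} - p_i ∂_{x^0}`. -/
noncomputable def XVF (n : ℕ) (i : Fin n) : Pt n → Pt n := fun m =>
  (Pi.single (Sum.inr (Sum.inr i)) 1 : Pt n) -
    m (Sum.inr (Sum.inl i)) • (Pi.single (Sum.inl ()) 1 : Pt n)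

open Sum

lemma pd_const {n : ℕ} (c : ℝ) (m : Pt n) (a : Idx n) : pd (fun _ => c) m a = 0 := by
  simp [pd]

lemma pd_coord {n : ℕ} (b : Idx n) (m : Pt n) (a : Idx n) :
    pd (fun m' : Pt n => m' b) m a = if b = a then 1 else 0 := by
  have h : (fun m' : Pt n => m' b) = (ContinuousLinearMap.proj b : Pt n →L[ℝ] ℝ) := rfl
  rw [pd, h, ContinuousLinearMap.fderiv]
  simp [Pi.single_apply]

lemma diff_coord {n : ℕ} (b : Idx n) (m : Pt n) :
    DifferentiableAt ℝ (fun m' : Pt n => m' b) m :=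
  (ContinuousLinearMap.proj b : Pt n →L[ℝ] ℝ).differentiableAt

lemma pd_mul {n : ℕ} (f g : Pt n → ℝ) (m : Pt n) (a : Idx n)
    (hf : DifferentiableAt ℝ f m) (hg : DifferentiableAt ℝ g m) :
    pd (fun m' => f m' * g m') m a = pd f m a * g m + f m * pd g m a := by
  rw [pd, fderiv_fun_mul hf hg]
  simp [pd]
  ring

/-- `∂_a G_{bc}` -/
def dGval {n : ℕ} (m : Pt n) (a b c : Idx n) : ℝ :=
  match a, b, c with
  | inr (inl k), inl _, inr (inr j) => if j = k then 1 else 0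
  | inr (inl k), inr (inr i), inl _ => if i = k then 1 else 0
  | inr (inl k), inr (inr i), inr (inr j) =>
      (if i = k then 1 else 0) * m (inr (inl j)) + m (inr (inl i)) * (if j = k then 1 else 0)
  | _, _, _ => 0

lemma pd_G {n : ℕ} (m : Pt n) (a b c : Idx n) :
    pd (fun m' => Gmat n m' b c) m a = dGval m a b c := by
  rcases b with _ | b | b <;> rcases c with _ | c | c <;>
    simp only [Gmat, Matrix.of_apply] <;>
    rcases a with _ | a | a <;>
    simp [dGval, pd_const, pd_coord, pd_mul _ _ _ _ (diff_coord _ _) (diff_coord _ _)]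

def Ginv (n : ℕ) (m : Pt n) : Matrix (Idx n) (Idx n) ℝ :=
  Matrix.of fun a b =>
    match a, b with
    | Sum.inl _, Sum.inl _ => 1
    | Sum.inl _, Sum.inr (Sum.inl j) => -(m (Sum.inr (Sum.inl j)))
    | Sum.inl _, Sum.inr (Sum.inr _) => 0
    | Sum.inr (Sum.inl i), Sum.inl _ => -(m (Sum.inr (Sum.inl i)))
    | Sum.inr (Sum.inl _), Sum.inr (Sum.inl _) => 0
    | Sum.inr (Sum.inl i), Sum.inr (Sum.inr j) => if i = j then 1 else 0
    | Sum.inr (Sum.inr _), Sum.inl _ => 0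
    | Sum.inr (Sum.inr i), Sum.inr (Sum.inl j) => if i = j then 1 else 0
    | Sum.inr (Sum.inr _), Sum.inr (Sum.inr _) => 0

lemma Gmat_mul_Ginv (n : ℕ) (m : Pt n) : Gmat n m * Ginv n m = 1 := by
  ext a b
  rcases a with _ | a | a <;> rcases b with _ | b | b <;>
    simp [Matrix.mul_apply, Fintype.sum_sum_type, Gmat, Ginv, Matrix.one_apply,
      Finset.sum_ite_eq, Finset.sum_ite_eq', mul_comm]

lemma Ginv_eq (n : ℕ) (m : Pt n) : (Gmat n m)⁻¹ = Ginv n m :=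
  Matrix.inv_eq_right_inv (Gmat_mul_Ginv n m)

/-- Closed form of the Christoffel symbols. -/
noncomputable def Γe {n : ℕ} (m : Pt n) (α β γ : Idx n) : ℝ :=
  match α, β, γ with
  | inl _, inl _, inr (inr j) => m (inr (inl j)) / 2
  | inl _, inr (inr j), inl _ => m (inr (inl j)) / 2
  | inl _, inr (inl i), inr (inr j) => (if i = j then 1 else 0) / 2
  | inl _, inr (inr i), inr (inl j) => (if j = i then 1 else 0) / 2
  | inl _, inr (inr i), inr (inr j) => m (inr (inl i)) * m (inr (inl j))
  | inr (inl k), inl _, inr (inl l) => (if l = k then 1 else 0) / 2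
  | inr (inl k), inr (inl l), inl _ => (if l = k then 1 else 0) / 2
  | inr (inl k), inr (inl l), inr (inr j) => (if l = k then 1 else 0) * m (inr (inl j)) / 2
  | inr (inl k), inr (inr j), inr (inl l) => (if l = k then 1 else 0) * m (inr (inl j)) / 2
  | inr (inr k), inl _, inr (inr l) => -((if l = k then 1 else 0) / 2)
  | inr (inr k), inr (inr l), inl _ => -((if l = k then 1 else 0) / 2)
  | inr (inr k), inr (inr i), inr (inr j) =>
      -(((if i = k then 1 else 0) * m (inr (inl j))
         + (if j = k then 1 else 0) * m (inr (inl i))) / 2)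
  | _, _, _ => 0

lemma sum_ite_irrel' {ι M : Type*} [Fintype ι] [AddCommMonoid M] (c : Prop) [Decidable c]
    (f g : ι → M) : (∑ x, if c then f x else g x) = if c then ∑ x, f x else ∑ x, g x := by
  split_ifs <;> rfl

set_option maxHeartbeats 1000000 in
lemma christoffel_eq {n : ℕ} (m : Pt n) (α β γ : Idx n) :
    Christoffel n m α β γ = Γe m α β γ := by
  rw [Christoffel]
  simp only [Ginv_eq, pd_G]
  rcases α with _ | α | α <;> rcases β with _ | β | β <;> rcases γ with _ | γ | γ <;>
    simp [Fintype.sum_sum_type, Ginv, dGval, Γe, Finset.sum_ite_eq, Finset.sum_ite_eq',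
      Finset.mul_sum, mul_add, add_mul, sub_eq_add_neg, mul_ite, ite_mul, sum_ite_irrel', Finset.sum_add_distrib]
  all_goals try ring
  all_goals split_ifs <;> (try subst_vars) <;> (try simp_all) <;> try ring

lemma pd_sub {n : ℕ} (f g : Pt n → ℝ) (m : Pt n) (a : Idx n)
    (hf : DifferentiableAt ℝ f m) (hg : DifferentiableAt ℝ g m) :
    pd (fun m' => f m' - g m') m a = pd f m a - pd g m a := by
  rw [pd, fderiv_fun_sub hf hg]; simp [pd]

lemma pd_neg {n : ℕ} (f : Pt n → ℝ) (m : Pt n) (a : Idx n) :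
    pd (fun m' => -(f m')) m a = -pd f m a := by
  rw [pd, fderiv_fun_neg]; simp [pd]

lemma pd_X {n : ℕ} (j : Fin n) (m : Pt n) (α β : Idx n) :
    pd (fun m' : Pt n =>
        (Pi.single (inr (inr j)) 1 : Pt n) α - m' (inr (inl j)) * (Pi.single (inl ()) 1 : Pt n) α)
      m β =
      -((if (inr (inl j) : Idx n) = β then 1 else 0) * (Pi.single (inl ()) 1 : Pt n) α) := by
  rw [pd_sub _ _ _ _ (differentiableAt_const _)
      ((diff_coord _ _).fun_mul (differentiableAt_const _))]
  rw [pd_mul _ _ _ _ (diff_coord _ _) (differentiableAt_const _)]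
  simp [pd_const, pd_coord]

set_option maxHeartbeats 1000000 in
lemma part1 (n : ℕ) (m : Pt n) (i j : Fin n) :
    covDeriv n (xiVF n) (xiVF n) m = 0 := by
  funext α <;> rcases α with _ | α | α <;>
    simp [covDeriv, christoffel_eq, Γe, xiVF, PVF, XVF, Pi.sub_apply, Pi.smul_apply,
      smul_eq_mul, Pi.neg_apply, Pi.single_apply, pd_const, pd_X, pd_neg, pd_coord,
      Fintype.sum_sum_type, Finset.sum_ite_eq, Finset.sum_ite_eq',
      mul_ite, ite_mul, sum_ite_irrel', Finset.sum_add_distrib, Finset.sum_sub_distrib,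
      mul_add, add_mul, sub_eq_add_neg, Finset.mul_sum]
  all_goals try ring
  all_goals try split_ifs <;> (try simp_all) <;> try ring

set_option maxHeartbeats 1000000 in
lemma part2 (n : ℕ) (m : Pt n) (i j : Fin n) :
    covDeriv n (PVF n i) (PVF n j) m = 0 := by
  funext α <;> rcases α with _ | α | α <;>
    simp [covDeriv, christoffel_eq, Γe, xiVF, PVF, XVF, Pi.sub_apply, Pi.smul_apply,
      smul_eq_mul, Pi.neg_apply, Pi.single_apply, pd_const, pd_X, pd_neg, pd_coord,
      Fintype.sum_sum_type, Finset.sum_ite_eq, Finset.sum_ite_eq',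
      mul_ite, ite_mul, sum_ite_irrel', Finset.sum_add_distrib, Finset.sum_sub_distrib,
      mul_add, add_mul, sub_eq_add_neg, Finset.mul_sum]
  all_goals try ring
  all_goals try split_ifs <;> (try simp_all) <;> try ring

set_option maxHeartbeats 1000000 in
lemma part3 (n : ℕ) (m : Pt n) (i j : Fin n) :
    covDeriv n (XVF n i) (XVF n j) m = 0 := by
  funext α <;> rcases α with _ | α | α <;>
    simp [covDeriv, christoffel_eq, Γe, xiVF, PVF, XVF, Pi.sub_apply, Pi.smul_apply,
      smul_eq_mul, Pi.neg_apply, Pi.single_apply, pd_const, pd_X, pd_neg, pd_coord,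
      Fintype.sum_sum_type, Finset.sum_ite_eq, Finset.sum_ite_eq',
      mul_ite, ite_mul, sum_ite_irrel', Finset.sum_add_distrib, Finset.sum_sub_distrib,
      mul_add, add_mul, sub_eq_add_neg, Finset.mul_sum]
  all_goals try ring
  all_goals try split_ifs <;> (try simp_all) <;> try ring

set_option maxHeartbeats 1000000 in
lemma part4 (n : ℕ) (m : Pt n) (i j : Fin n) :
    covDeriv n (xiVF n) (PVF n i) m = (1 / 2 : ℝ) • PVF n i m := by
  funext α <;> rcases α with _ | α | α <;>
    simp [covDeriv, christoffel_eq, Γe, xiVF, PVF, XVF, Pi.sub_apply, Pi.smul_apply,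
      smul_eq_mul, Pi.neg_apply, Pi.single_apply, pd_const, pd_X, pd_neg, pd_coord,
      Fintype.sum_sum_type, Finset.sum_ite_eq, Finset.sum_ite_eq',
      mul_ite, ite_mul, sum_ite_irrel', Finset.sum_add_distrib, Finset.sum_sub_distrib,
      mul_add, add_mul, sub_eq_add_neg, Finset.mul_sum]
  all_goals try ring
  all_goals try split_ifs <;> (try simp_all) <;> try ring

set_option maxHeartbeats 1000000 in
lemma part5 (n : ℕ) (m : Pt n) (i j : Fin n) :
    covDeriv n (PVF n i) (xiVF n) m = (1 / 2 : ℝ) • PVF n i m := by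
  funext α <;> rcases α with _ | α | α <;>
    simp [covDeriv, christoffel_eq, Γe, xiVF, PVF, XVF, Pi.sub_apply, Pi.smul_apply,
      smul_eq_mul, Pi.neg_apply, Pi.single_apply, pd_const, pd_X, pd_neg, pd_coord,
      Fintype.sum_sum_type, Finset.sum_ite_eq, Finset.sum_ite_eq',
      mul_ite, ite_mul, sum_ite_irrel', Finset.sum_add_distrib, Finset.sum_sub_distrib,
      mul_add, add_mul, sub_eq_add_neg, Finset.mul_sum]
  all_goals try ring
  all_goals try split_ifs <;> (try simp_all) <;> try ring

set_option maxHeartbeats 1000000 in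
lemma part6 (n : ℕ) (m : Pt n) (i j : Fin n) :
    covDeriv n (xiVF n) (XVF n j) m = -((1 / 2 : ℝ) • XVF n j m) := by
  funext α <;> rcases α with _ | α | α <;>
    simp [covDeriv, christoffel_eq, Γe, xiVF, PVF, XVF, Pi.sub_apply, Pi.smul_apply,
      smul_eq_mul, Pi.neg_apply, Pi.single_apply, pd_const, pd_X, pd_neg, pd_coord,
      Fintype.sum_sum_type, Finset.sum_ite_eq, Finset.sum_ite_eq',
      mul_ite, ite_mul, sum_ite_irrel', Finset.sum_add_distrib, Finset.sum_sub_distrib,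
      mul_add, add_mul, sub_eq_add_neg, Finset.mul_sum]
  all_goals try ring
  all_goals try split_ifs <;> (try simp_all) <;> try ring

set_option maxHeartbeats 1000000 in
lemma part7 (n : ℕ) (m : Pt n) (i j : Fin n) :
    covDeriv n (XVF n j) (xiVF n) m = -((1 / 2 : ℝ) • XVF n j m) := by
  funext α <;> rcases α with _ | α | α <;>
    simp [covDeriv, christoffel_eq, Γe, xiVF, PVF, XVF, Pi.sub_apply, Pi.smul_apply,
      smul_eq_mul, Pi.neg_apply, Pi.single_apply, pd_const, pd_X, pd_neg, pd_coord,
      Fintype.sum_sum_type, Finset.sum_ite_eq, Finset.sum_ite_eq',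
      mul_ite, ite_mul, sum_ite_irrel', Finset.sum_add_distrib, Finset.sum_sub_distrib,
      mul_add, add_mul, sub_eq_add_neg, Finset.mul_sum]
  all_goals try ring
  all_goals try split_ifs <;> (try simp_all) <;> try ring

set_option maxHeartbeats 1000000 in
lemma part8 (n : ℕ) (m : Pt n) (i j : Fin n) :
    covDeriv n (PVF n i) (XVF n j) m = -(((1 / 2 : ℝ) * if i = j then 1 else 0) • xiVF n m) := by
  funext α <;> rcases α with _ | α | α <;>
    simp [covDeriv, christoffel_eq, Γe, xiVF, PVF, XVF, Pi.sub_apply, Pi.smul_apply,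
      smul_eq_mul, Pi.neg_apply, Pi.single_apply, pd_const, pd_X, pd_neg, pd_coord,
      Fintype.sum_sum_type, Finset.sum_ite_eq, Finset.sum_ite_eq',
      mul_ite, ite_mul, sum_ite_irrel', Finset.sum_add_distrib, Finset.sum_sub_distrib,
      mul_add, add_mul, sub_eq_add_neg, Finset.mul_sum]
  all_goals try ring
  all_goals try split_ifs <;> (try simp_all) <;> try ring

set_option maxHeartbeats 1000000 in
lemma part9 (n : ℕ) (m : Pt n) (i j : Fin n) :
    covDeriv n (XVF n i) (PVF n j) m = ((1 / 2 : ℝ) * if i = j then 1 else 0) • xiVF n m := by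
  funext α <;> rcases α with _ | α | α <;>
    simp [covDeriv, christoffel_eq, Γe, xiVF, PVF, XVF, Pi.sub_apply, Pi.smul_apply,
      smul_eq_mul, Pi.neg_apply, pd_const, pd_X, pd_neg, pd_coord,
      Fintype.sum_sum_type, Finset.sum_ite_eq, Finset.sum_ite_eq',
      mul_ite, ite_mul, sum_ite_irrel', Finset.sum_add_distrib, Finset.sum_sub_distrib,
      mul_add, add_mul, sub_eq_add_neg, Finset.mul_sum]
  all_goals simp [Pi.single_apply, mul_ite, ite_mul, Finset.sum_ite_eq, Finset.sum_ite_eq', sum_ite_irrel', Finset.sum_add_distrib, Finset.sum_sub_distrib]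
  all_goals try ring
  all_goals try split_ifs <;> (try simp_all) <;> try ring

theorem mrugala_levi_civita_frame (n : ℕ) (hn : 1 ≤ n) (m : Pt n) (i j : Fin n) :
    covDeriv n (xiVF n) (xiVF n) m = 0 ∧
    covDeriv n (PVF n i) (PVF n j) m = 0 ∧
    covDeriv n (XVF n i) (XVF n j) m = 0 ∧
    covDeriv n (xiVF n) (PVF n i) m = (1 / 2 : ℝ) • PVF n i m ∧
    covDeriv n (PVF n i) (xiVF n) m = (1 / 2 : ℝ) • PVF n i m ∧
    covDeriv n (xiVF n) (XVF n j) m = -((1 / 2 : ℝ) • XVF n j m) ∧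
    covDeriv n (XVF n j) (xiVF n) m = -((1 / 2 : ℝ) • XVF n j m) ∧
    covDeriv n (PVF n i) (XVF n j) m =
      -(((1 / 2 : ℝ) * if i = j then 1 else 0) • xiVF n m) ∧
    covDeriv n (XVF n i) (PVF n j) m =
      ((1 / 2 : ℝ) * if i = j then 1 else 0) • xiVF n m :=
  ⟨part1 n m i j, part2 n m i j, part3 n m i j, part4 n m i j, part5 n m i j,
   part6 n m i j, part7 n m i j, part8 n m i j, part9 n m i j⟩
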